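/- For a permutation $\sigma$ of $\{1,2,3,4\}$, the following are equivalent: (a) $|\phi_{z^\sigma}| = |\phi_z|$ for every $z \in \mathbb{C}^4$ (where $z^\sigma = (z_{\sigma(1)},z_{\sigma(2)},z_{\sigma(3)},z_{\sigma(4)})$); (b) $\sigma$ preserves the partition structure, i.e., $\{\sigma(1),\sigma(4)\} = \{1,4\}$ or $\{\sigma(1),\sigma(4)\} = \{2,3\}$; (c) $\sigma$ is one of the eight permutations $\langle 1234\rangle, \langle 1324\rangle, \langle 4231\rangle, \langle 4321\rangle, \langle 2143\rangle, \langle 2413\rangle, \langle 3142\rangle, \langle 3412\rangle$. -/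

import Mathlib

open Complex Real

noncomputable def Xfun (z : Fin 4 → ℂ) (σ : ℝ) : ℝ :=
  ‖z 0 * Complex.exp (σ * Complex.I) + (starRingEnd ℂ) (z 3)‖ +
  ‖z 1 * Complex.exp (σ * Complex.I) + (starRingEnd ℂ) (z 2)‖

noncomputable def Xnorm (z : Fin 4 → ℂ) : ℝ := ⨆ σ : ℝ, Xfun z σ

noncomputable def phase (z : Fin 4 → ℂ) : ℝ :=
  (Complex.arg (z 0) + Complex.arg (z 3)) - (Complex.arg (z 1) + Complex.arg (z 2))

lemma part2aux : ∀ σ : Equiv.Perm (Fin 4),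
    (({σ 0, σ 3} : Finset (Fin 4)) = {0, 3} ∨ ({σ 0, σ 3} : Finset (Fin 4)) = {1, 2})
    ↔ ((σ 0, σ 1, σ 2, σ 3) = (0, 1, 2, 3) ∨ (σ 0, σ 1, σ 2, σ 3) = (0, 2, 1, 3) ∨ (σ 0, σ 1, σ 2, σ 3) = (3, 1, 2, 0) ∨ (σ 0, σ 1, σ 2, σ 3) = (3, 2, 1, 0) ∨ (σ 0, σ 1, σ 2, σ 3) = (1, 0, 3, 2) ∨ (σ 0, σ 1, σ 2, σ 3) = (1, 3, 0, 2) ∨ (σ 0, σ 1, σ 2, σ 3) = (2, 0, 3, 1) ∨ (σ 0, σ 1, σ 2, σ 3) = (2, 3, 0, 1)) := by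
  decide

lemma badaux : ∀ σ : Equiv.Perm (Fin 4),
    (({σ 0, σ 3} : Finset (Fin 4)) = {0, 3} ∨ ({σ 0, σ 3} : Finset (Fin 4)) = {1, 2})
    ∨ (σ 0, σ 1, σ 2, σ 3) ∈ ([(0, 1, 3, 2), (0, 2, 3, 1), (0, 3, 1, 2), (0, 3, 2, 1), (1, 0, 2, 3), (1, 2, 0, 3), (1, 2, 3, 0), (1, 3, 2, 0), (2, 0, 1, 3), (2, 1, 0, 3), (2, 1, 3, 0), (2, 3, 1, 0), (3, 0, 1, 2), (3, 0, 2, 1), (3, 1, 0, 2), (3, 2, 0, 1)] : List (Fin 4 × Fin 4 × Fin 4 × Fin 4)) := by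
  decide

lemma angle_aux (r : ℝ) (hr : r = 0 ∨ r = 2*π ∨ r = -(2*π)) :
    ¬(((r : ℝ) : Real.Angle) = ((π : ℝ) : Real.Angle) ∨
      ((r : ℝ) : Real.Angle) = -((π : ℝ) : Real.Angle)) := by
  have h0 : ((r : ℝ) : Real.Angle) = 0 := by
    rcases hr with h | h | h <;> rw [h]
    · norm_cast
    · exact Real.Angle.coe_two_pi
    · rw [Real.Angle.coe_neg, Real.Angle.coe_two_pi, neg_zero]
  rw [h0, Real.Angle.neg_coe_pi]
  intro h
  exact Real.Angle.pi_ne_zero ((h.elim Eq.symm Eq.symm))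

theorem stmt_12 (σ : Equiv.Perm (Fin 4)) :
    ((∀ z : Fin 4 → ℂ,
        ((phase (fun i => z (σ i)) : Real.Angle) = (phase z : Real.Angle)) ∨
        ((phase (fun i => z (σ i)) : Real.Angle) = -(phase z : Real.Angle)))
      ↔ (({σ 0, σ 3} : Finset (Fin 4)) = {0, 3} ∨ ({σ 0, σ 3} : Finset (Fin 4)) = {1, 2}))
    ∧
    ((({σ 0, σ 3} : Finset (Fin 4)) = {0, 3} ∨ ({σ 0, σ 3} : Finset (Fin 4)) = {1, 2})
      ↔ (σ 0, σ 1, σ 2, σ 3) ∈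
        ({(0,1,2,3), (0,2,1,3), (3,1,2,0), (3,2,1,0),
          (1,0,3,2), (1,3,0,2), (2,0,3,1), (2,3,0,1)} :
          Set (Fin 4 × Fin 4 × Fin 4 × Fin 4))) := by
  constructor
  · constructor
    · -- forward
      intro h
      by_contra hn
      have hb := (badaux σ).resolve_left hn
      simp only [List.mem_cons, List.not_mem_nil, or_false] at hb
      set w : Fin 4 → ℂ := ![1, Complex.I, -Complex.I, -1] with hw
      have hz : phase w = π := by
        norm_num [phase, hw, Complex.arg_one, Complex.arg_neg_one, Complex.arg_I, Complex.arg_neg_I, Matrix.cons_val_three, Matrix.cons_val_two, Matrix.vecHead, Matrix.vecTail]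
        try ring
      have hh := h w
      rcases hb with h0 | h1 | h2 | h3 | h4 | h5 | h6 | h7 | h8 | h9 | h10 | h11 | h12 | h13 | h14 | h15
      · simp only [Prod.mk.injEq] at h0
        obtain ⟨e0, e1, e2, e3⟩ := h0
        have hv : phase (fun i => w (σ i)) = -(2*π) := by
          simp [phase, hw, e0, e1, e2, e3]
          try ring
        rw [hv, hz] at hh
        exact angle_aux _ (Or.inr (Or.inr rfl)) hh
      · simp only [Prod.mk.injEq] at h1
        obtain ⟨e0, e1, e2, e3⟩ := h1
        have hv : phase (fun i => w (σ i)) = 0 := by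
          simp [phase, hw, e0, e1, e2, e3]
          try ring
        rw [hv, hz] at hh
        exact angle_aux _ (Or.inl rfl) hh
      · simp only [Prod.mk.injEq] at h2
        obtain ⟨e0, e1, e2, e3⟩ := h2
        have hv : phase (fun i => w (σ i)) = -(2*π) := by
          simp [phase, hw, e0, e1, e2, e3]
          try ring
        rw [hv, hz] at hh
        exact angle_aux _ (Or.inr (Or.inr rfl)) hh
      · simp only [Prod.mk.injEq] at h3
        obtain ⟨e0, e1, e2, e3⟩ := h3
        have hv : phase (fun i => w (σ i)) = 0 := by
          simp [phase, hw, e0, e1, e2, e3]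
          try ring
        rw [hv, hz] at hh
        exact angle_aux _ (Or.inl rfl) hh
      · simp only [Prod.mk.injEq] at h4
        obtain ⟨e0, e1, e2, e3⟩ := h4
        have hv : phase (fun i => w (σ i)) = 2*π := by
          simp [phase, hw, e0, e1, e2, e3]
          try ring
        rw [hv, hz] at hh
        exact angle_aux _ (Or.inr (Or.inl rfl)) hh
      · simp only [Prod.mk.injEq] at h5
        obtain ⟨e0, e1, e2, e3⟩ := h5
        have hv : phase (fun i => w (σ i)) = 2*π := by
          simp [phase, hw, e0, e1, e2, e3]
          try ring
        rw [hv, hz] at hh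
        exact angle_aux _ (Or.inr (Or.inl rfl)) hh
      · simp only [Prod.mk.injEq] at h6
        obtain ⟨e0, e1, e2, e3⟩ := h6
        have hv : phase (fun i => w (σ i)) = 0 := by
          simp [phase, hw, e0, e1, e2, e3]
          try ring
        rw [hv, hz] at hh
        exact angle_aux _ (Or.inl rfl) hh
      · simp only [Prod.mk.injEq] at h7
        obtain ⟨e0, e1, e2, e3⟩ := h7
        have hv : phase (fun i => w (σ i)) = 0 := by
          simp [phase, hw, e0, e1, e2, e3]
          try ring
        rw [hv, hz] at hh
        exact angle_aux _ (Or.inl rfl) hh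
      · simp only [Prod.mk.injEq] at h8
        obtain ⟨e0, e1, e2, e3⟩ := h8
        have hv : phase (fun i => w (σ i)) = 0 := by
          simp [phase, hw, e0, e1, e2, e3]
          try ring
        rw [hv, hz] at hh
        exact angle_aux _ (Or.inl rfl) hh
      · simp only [Prod.mk.injEq] at h9
        obtain ⟨e0, e1, e2, e3⟩ := h9
        have hv : phase (fun i => w (σ i)) = 0 := by
          simp [phase, hw, e0, e1, e2, e3]
          try ring
        rw [hv, hz] at hh
        exact angle_aux _ (Or.inl rfl) hh
      · simp only [Prod.mk.injEq] at h10
        obtain ⟨e0, e1, e2, e3⟩ := h10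
        have hv : phase (fun i => w (σ i)) = -(2*π) := by
          simp [phase, hw, e0, e1, e2, e3]
          try ring
        rw [hv, hz] at hh
        exact angle_aux _ (Or.inr (Or.inr rfl)) hh
      · simp only [Prod.mk.injEq] at h11
        obtain ⟨e0, e1, e2, e3⟩ := h11
        have hv : phase (fun i => w (σ i)) = -(2*π) := by
          simp [phase, hw, e0, e1, e2, e3]
          try ring
        rw [hv, hz] at hh
        exact angle_aux _ (Or.inr (Or.inr rfl)) hh
      · simp only [Prod.mk.injEq] at h12
        obtain ⟨e0, e1, e2, e3⟩ := h12
        have hv : phase (fun i => w (σ i)) = 0 := by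
          simp [phase, hw, e0, e1, e2, e3]
          try ring
        rw [hv, hz] at hh
        exact angle_aux _ (Or.inl rfl) hh
      · simp only [Prod.mk.injEq] at h13
        obtain ⟨e0, e1, e2, e3⟩ := h13
        have hv : phase (fun i => w (σ i)) = 2*π := by
          simp [phase, hw, e0, e1, e2, e3]
          try ring
        rw [hv, hz] at hh
        exact angle_aux _ (Or.inr (Or.inl rfl)) hh
      · simp only [Prod.mk.injEq] at h14
        obtain ⟨e0, e1, e2, e3⟩ := h14
        have hv : phase (fun i => w (σ i)) = 0 := by
          simp [phase, hw, e0, e1, e2, e3]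
          try ring
        rw [hv, hz] at hh
        exact angle_aux _ (Or.inl rfl) hh
      · simp only [Prod.mk.injEq] at h15
        obtain ⟨e0, e1, e2, e3⟩ := h15
        have hv : phase (fun i => w (σ i)) = 2*π := by
          simp [phase, hw, e0, e1, e2, e3]
          try ring
        rw [hv, hz] at hh
        exact angle_aux _ (Or.inr (Or.inl rfl)) hh
    · -- backward
      intro hp z
      have hg := (part2aux σ).mp hp
      rcases hg with h0 | h1 | h2 | h3 | h4 | h5 | h6 | h7
      · simp only [Prod.mk.injEq] at h0
        obtain ⟨e0, e1, e2, e3⟩ := h0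
        left
        have : phase (fun i => z (σ i)) = phase z := by
          simp only [phase, e0, e1, e2, e3]; try ring
        rw [this]
      · simp only [Prod.mk.injEq] at h1
        obtain ⟨e0, e1, e2, e3⟩ := h1
        left
        have : phase (fun i => z (σ i)) = phase z := by
          simp only [phase, e0, e1, e2, e3]; try ring
        rw [this]
      · simp only [Prod.mk.injEq] at h2
        obtain ⟨e0, e1, e2, e3⟩ := h2
        left
        have : phase (fun i => z (σ i)) = phase z := by
          simp only [phase, e0, e1, e2, e3]; try ring
        rw [this]
      · simp only [Prod.mk.injEq] at h3
        obtain ⟨e0, e1, e2, e3⟩ := h3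
        left
        have : phase (fun i => z (σ i)) = phase z := by
          simp only [phase, e0, e1, e2, e3]; try ring
        rw [this]
      · simp only [Prod.mk.injEq] at h4
        obtain ⟨e0, e1, e2, e3⟩ := h4
        right
        rw [← Real.Angle.coe_neg]
        have : phase (fun i => z (σ i)) = -phase z := by
          simp only [phase, e0, e1, e2, e3]; try ring
        rw [this]
      · simp only [Prod.mk.injEq] at h5
        obtain ⟨e0, e1, e2, e3⟩ := h5
        right
        rw [← Real.Angle.coe_neg]
        have : phase (fun i => z (σ i)) = -phase z := by
          simp only [phase, e0, e1, e2, e3]; try ring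
        rw [this]
      · simp only [Prod.mk.injEq] at h6
        obtain ⟨e0, e1, e2, e3⟩ := h6
        right
        rw [← Real.Angle.coe_neg]
        have : phase (fun i => z (σ i)) = -phase z := by
          simp only [phase, e0, e1, e2, e3]; try ring
        rw [this]
      · simp only [Prod.mk.injEq] at h7
        obtain ⟨e0, e1, e2, e3⟩ := h7
        right
        rw [← Real.Angle.coe_neg]
        have : phase (fun i => z (σ i)) = -phase z := by
          simp only [phase, e0, e1, e2, e3]; try ring
        rw [this]
  · rw [Set.mem_insert_iff, Set.mem_insert_iff, Set.mem_insert_iff, Set.mem_insert_iff,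
      Set.mem_insert_iff, Set.mem_insert_iff, Set.mem_insert_iff, Set.mem_singleton_iff]
    exact part2aux σ
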